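/- For $p \in (0,1)$ and integers $1 \le k \le A-1$ and reals $a, b \ge 0$, the following lower bound holds: $\sum_{k=1}^{A-1}\binom{A}{k}p^k(1-p)^{A-k}\left(1 - \frac{a}{k}\right)\left(1 - \frac{b}{A-k}\right) \ge 1 - (1-p)^A - p^A - \frac{2a}{pA} - \frac{2b}{(1-p)A}$. -/

import Mathlib

open Finset

lemma binom_one (p : ℝ) (A : ℕ) :
    ∑ k ∈ range (A+1), (A.choose k : ℝ) * p ^ k * (1 - p) ^ (A - k) = 1 := by
  have h := add_pow p (1-p) A
  have : p + (1 - p) = 1 := by ring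
  rw [this, one_pow] at h
  have h2 : ∑ k ∈ range (A+1), (A.choose k : ℝ) * p ^ k * (1 - p) ^ (A - k)
      = ∑ m ∈ range (A+1), p ^ m * (1 - p) ^ (A - m) * (A.choose m : ℝ) :=
    Finset.sum_congr rfl fun k _ => by ring
  rw [h2, ← h]

lemma harm (p : ℝ) (hp0 : 0 < p) (hp1 : p < 1) (A : ℕ) (hA : 2 ≤ A) :
    ∑ k ∈ Ico 1 A, (A.choose k : ℝ) * p ^ k * (1 - p) ^ (A - k) / k ≤ 2 / (p * A) := by
  have hq : (0:ℝ) ≤ 1 - p := by linarith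
  have hA1 : (0:ℝ) < (A:ℝ) + 1 := by positivity
  have key : ∑ k ∈ Ico 1 A, (A.choose k : ℝ) * p ^ k * (1 - p) ^ (A - k) / k
      ≤ ∑ k ∈ Ico 1 A, 2 / (p * ((A:ℝ)+1)) *
        (((A+1).choose (k+1) : ℝ) * p ^ (k+1) * (1 - p) ^ ((A+1) - (k+1))) := by
    apply Finset.sum_le_sum
    intro k hk
    obtain ⟨hk1, hkA⟩ := mem_Ico.mp hk
    have hkpos : (0:ℝ) < (k:ℝ) := by exact_mod_cast hk1
    have hid : ((A:ℝ)+1) * (A.choose k) = ((A+1).choose (k+1) : ℝ) * ((k:ℝ)+1) := by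
      exact_mod_cast congrArg (Nat.cast (R := ℝ)) (Nat.add_one_mul_choose_eq A k)
    have hsub : (A+1) - (k+1) = A - k := by omega
    rw [hsub]
    have h1 : (A.choose k : ℝ) / k ≤ 2 * ((A+1).choose (k+1) : ℝ) / ((A:ℝ)+1) := by
      rw [div_le_div_iff₀ hkpos hA1]
      have hCk : (A.choose k : ℝ) * ((k:ℝ)+1) = ((A+1).choose (k+1) : ℝ) * ((k:ℝ)+1) * ((k:ℝ)+1) / ((A:ℝ)+1) := by
        field_simp
        nlinarith [hid]
      nlinarith [(by positivity : (0:ℝ) ≤ ((A+1).choose (k+1) :ℝ)), hkpos,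
        mul_le_mul_of_nonneg_left (show (k:ℝ) + 1 ≤ 2 * (k:ℝ) by linarith [hkpos, (by exact_mod_cast hk1 : (1:ℝ) ≤ k)]) (by positivity : (0:ℝ) ≤ ((A+1).choose (k+1) :ℝ))]
    calc (A.choose k : ℝ) * p ^ k * (1 - p) ^ (A - k) / k
        = ((A.choose k : ℝ) / k) * (p ^ k * (1 - p) ^ (A - k)) := by ring
      _ ≤ (2 * ((A+1).choose (k+1) : ℝ) / ((A:ℝ)+1)) * (p ^ k * (1 - p) ^ (A - k)) := by
          apply mul_le_mul_of_nonneg_right h1 (by positivity)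
      _ = 2 / (p * ((A:ℝ)+1)) * (((A+1).choose (k+1) : ℝ) * p ^ (k+1) * (1 - p) ^ (A - k)) := by
          field_simp; ring
  rw [← Finset.mul_sum] at key
  have hsum1 : ∑ k ∈ Ico 1 A, (((A+1).choose (k+1) : ℝ) * p ^ (k+1) * (1 - p) ^ ((A+1) - (k+1))) ≤ 1 := by
    have hre : ∑ k ∈ Ico 1 A, (((A+1).choose (k+1) : ℝ) * p ^ (k+1) * (1 - p) ^ ((A+1) - (k+1)))
        = ∑ j ∈ Ico 2 (A+1), (((A+1).choose j : ℝ) * p ^ j * (1 - p) ^ ((A+1) - j)) := by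
      rw [← Finset.sum_Ico_add' (fun j => (((A+1).choose j : ℝ) * p ^ j * (1 - p) ^ ((A+1) - j))) 1 A 1]
    have hsub : ∑ j ∈ Ico 2 (A+1), (((A+1).choose j : ℝ) * p ^ j * (1 - p) ^ ((A+1) - j))
        ≤ ∑ j ∈ range (A+2), (((A+1).choose j : ℝ) * p ^ j * (1 - p) ^ ((A+1) - j)) := by
      apply Finset.sum_le_sum_of_subset_of_nonneg
      · intro x hx; simp at hx ⊢; omega
      · intro i _ _
        have hq' : (0:ℝ) ≤ 1 - p := hq
        positivity
    have hb := binom_one p (A+1)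
    rw [hre]
    linarith
  calc ∑ k ∈ Ico 1 A, (A.choose k : ℝ) * p ^ k * (1 - p) ^ (A - k) / k
      ≤ 2 / (p * ((A:ℝ)+1)) * ∑ k ∈ Ico 1 A, (((A+1).choose (k+1) : ℝ) * p ^ (k+1) * (1 - p) ^ ((A+1) - (k+1))) := key
    _ ≤ 2 / (p * ((A:ℝ)+1)) * 1 := by
        apply mul_le_mul_of_nonneg_left hsum1 (by positivity)
    _ ≤ 2 / (p * A) := by
        rw [mul_one]
        apply div_le_div_of_nonneg_left (by norm_num) (by positivity)
        have : (0:ℝ) < A := by positivity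
        nlinarith

theorem stmt_16 (p : ℝ) (hp0 : 0 < p) (hp1 : p < 1) (A : ℕ) (hA : 2 ≤ A)
    (a b : ℝ) (ha : 0 ≤ a) (hb : 0 ≤ b) :
    1 - (1 - p) ^ A - p ^ A - 2 * a / (p * A) - 2 * b / ((1 - p) * A)
      ≤ ∑ k ∈ Finset.Ico 1 A, (A.choose k : ℝ) * p ^ k * (1 - p) ^ (A - k) *
          (1 - a / (k : ℝ)) * (1 - b / ((A - k : ℕ) : ℝ)) := by
  have hq0 : (0:ℝ) < 1 - p := by linarith
  set w : ℕ → ℝ := fun k => (A.choose k : ℝ) * p ^ k * (1 - p) ^ (A - k) with hw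
  -- sum of weights
  have hb1 := binom_one p A
  have hsumw : ∑ k ∈ Ico 1 A, w k = 1 - (1 - p) ^ A - p ^ A := by
    have h0 : ∑ k ∈ range (A+1), w k = 1 := hb1
    rw [range_eq_Ico, Finset.sum_eq_sum_Ico_succ_bot (by omega) w,
      Finset.sum_Ico_succ_top (by omega) w] at h0
    have hw0 : w 0 = (1 - p) ^ A := by simp [hw]
    have hwA : w A = p ^ A := by simp [hw]
    rw [hw0, hwA] at h0
    linarith
  -- first harmonic bound
  have hharm1 : ∑ k ∈ Ico 1 A, w k / k ≤ 2 / (p * A) := harm p hp0 hp1 A hA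
  -- second harmonic bound via reflection
  have hharm2 : ∑ k ∈ Ico 1 A, w k / ((A - k : ℕ) : ℝ) ≤ 2 / ((1 - p) * A) := by
    have hrefl : ∑ k ∈ Ico 1 A, w k / ((A - k : ℕ) : ℝ)
        = ∑ k ∈ Ico 1 A, (A.choose k : ℝ) * (1-p) ^ k * (1 - (1-p)) ^ (A - k) / k := by
      apply Finset.sum_nbij' (i := fun k => A - k) (j := fun k => A - k)
      · intro x hx; simp only [mem_Ico] at hx ⊢; omega
      · intro x hx; simp only [mem_Ico] at hx ⊢; omega
      · intro x hx; simp only [mem_Ico] at hx; omega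
      · intro x hx; simp only [mem_Ico] at hx; omega
      · intro x hx
        simp only [mem_Ico] at hx
        have hxA : x ≤ A := by omega
        rw [Nat.choose_symm hxA, Nat.sub_sub_self hxA, sub_sub_cancel, hw]
        ring
    rw [hrefl]
    have := harm (1-p) hq0 (by linarith) A hA
    simpa using this
  -- pointwise bound
  have hpt : ∑ k ∈ Ico 1 A, (w k - (w k / k) * a - (w k / ((A - k : ℕ) : ℝ)) * b)
      ≤ ∑ k ∈ Ico 1 A, w k * (1 - a / (k : ℝ)) * (1 - b / ((A - k : ℕ) : ℝ)) := by
    apply Finset.sum_le_sum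
    intro k hk
    obtain ⟨hk1, hkA⟩ := mem_Ico.mp hk
    have hkpos : (0:ℝ) < (k:ℝ) := by exact_mod_cast hk1
    have hAk : (0:ℝ) < ((A - k : ℕ) : ℝ) := by
      have : 1 ≤ A - k := by omega
      exact_mod_cast this
    have hwpos : 0 ≤ w k := by
      have : (0:ℝ) ≤ 1 - p := le_of_lt hq0
      positivity
    have hx : 0 ≤ a / (k:ℝ) := by positivity
    have hy : 0 ≤ b / ((A - k : ℕ) : ℝ) := by positivity
    have hexp1 : (w k / k) * a = w k * (a / (k:ℝ)) := by ring
    have hexp2 : (w k / ((A - k : ℕ) : ℝ)) * b = w k * (b / ((A - k : ℕ) : ℝ)) := by ring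
    rw [hexp1, hexp2]
    nlinarith [mul_nonneg (mul_nonneg hwpos hx) hy]
  have hsplit : ∑ k ∈ Ico 1 A, (w k - (w k / k) * a - (w k / ((A - k : ℕ) : ℝ)) * b)
      = (∑ k ∈ Ico 1 A, w k) - (∑ k ∈ Ico 1 A, w k / k) * a
        - (∑ k ∈ Ico 1 A, w k / ((A - k : ℕ) : ℝ)) * b := by
    rw [Finset.sum_sub_distrib, Finset.sum_sub_distrib, ← Finset.sum_mul, ← Finset.sum_mul]
  have hgoal_eq : ∑ k ∈ Finset.Ico 1 A, (A.choose k : ℝ) * p ^ k * (1 - p) ^ (A - k) *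
          (1 - a / (k : ℝ)) * (1 - b / ((A - k : ℕ) : ℝ))
      = ∑ k ∈ Ico 1 A, w k * (1 - a / (k : ℝ)) * (1 - b / ((A - k : ℕ) : ℝ)) := rfl
  rw [hgoal_eq]
  have h1 : (∑ k ∈ Ico 1 A, w k / k) * a ≤ (2 / (p * A)) * a :=
    mul_le_mul_of_nonneg_right hharm1 ha
  have h2 : (∑ k ∈ Ico 1 A, w k / ((A - k : ℕ) : ℝ)) * b ≤ (2 / ((1 - p) * A)) * b :=
    mul_le_mul_of_nonneg_right hharm2 hb
  have e1 : (2 / (p * A)) * a = 2 * a / (p * A) := by ring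
  have e2 : (2 / ((1 - p) * A)) * b = 2 * b / ((1 - p) * A) := by ring
  linarith [hpt, hsplit]
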